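/- arXiv:1110.3310 — 4 statements merged into one kernel-verified Lean document; each statement's English description precedes it below -/
import Mathlib

section
/- Let p ≥ 1, q ≥ 1 be integers. The 2q+1 sets T_0 and T_{j,ε} (for 1 ≤ j ≤ q and ε ∈ {0,1}) cover T, i.e. T = T_0 ∪ ⋃_{j,ε} T_{j,ε}, and these 2q+1 sets have pairwise disjoint topological interiors (as subsets of ℝ^{p−1} × ℝ^q). (This is the set-level content of the subdivision rule for the (p+q)-torus: the tile Δ^{p−1} × I^q is subdivided into one copy of Δ^{p−1} × I^q and 2q pieces of type Δ^p × I^{q−1}.) -/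
open Set

/-- The standard `m`-simplex `{x ∈ ℝ^m : xᵢ ≥ 0, ∑ xᵢ ≤ 1}`. -/
def stdSimplexSet (m : ℕ) : Set (Fin m → ℝ) :=
  {x | (∀ i, 0 ≤ x i) ∧ ∑ i, x i ≤ 1}

/-- The tile `T = Δ^{p-1} × [0,1]^q ⊆ ℝ^{p-1} × ℝ^q`. -/
def tileT (p q : ℕ) : Set ((Fin (p - 1) → ℝ) × (Fin q → ℝ)) :=
  {z | z.1 ∈ stdSimplexSet (p - 1) ∧ ∀ j, z.2 j ∈ Icc (0 : ℝ) 1}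

/-- `s(x) = (1 + x₁ + ⋯ + x_{p-1})/2`. -/
noncomputable def sFun (p : ℕ) (x : Fin (p - 1) → ℝ) : ℝ := (1 + ∑ i, x i) / 2

/-- The `2q+1` subtiles: `none` is `T₀ = {(x,w) ∈ T : max_j |2w_j - 1| ≤ s(x)}`,
and `some (j, ε)` is `T_{j,ε}`. -/
def subtile (p q : ℕ) : Option (Fin q × Bool) → Set ((Fin (p - 1) → ℝ) × (Fin q → ℝ))
  | none => {z ∈ tileT p q | ∀ j, |2 * z.2 j - 1| ≤ sFun p z.1}
  | some (j, e) =>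
      {z ∈ tileT p q |
        (∀ k, |2 * z.2 k - 1| ≤ (if e then 2 * z.2 j - 1 else 1 - 2 * z.2 j)) ∧
        sFun p z.1 ≤ (if e then 2 * z.2 j - 1 else 1 - 2 * z.2 j)}

lemma sFun_half {p : ℕ} {x : Fin (p - 1) → ℝ} (hx : ∀ i, 0 ≤ x i) :
    (1 : ℝ) / 2 ≤ sFun p x := by
  have : (0:ℝ) ≤ ∑ i, x i := Finset.sum_nonneg fun i _ => hx i
  unfold sFun; linarith

lemma key_disj {m q : ℕ} {A B : Set ((Fin m → ℝ) × (Fin q → ℝ))} (j : Fin q) (c : ℝ)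
    (hc : c ≠ 0) (g : ((Fin m → ℝ) × (Fin q → ℝ)) → ℝ)
    (hlin : ∀ z t, g (z.1, Function.update z.2 j (z.2 j + t)) = g z + c * t)
    (hA : ∀ z ∈ A, 0 ≤ g z) (hB : ∀ z ∈ B, g z ≤ 0) :
    Disjoint (interior A) (interior B) := by
  rw [Set.disjoint_left]
  intro z hzA hzB
  have hgz : 0 ≤ g z := hA z (interior_subset hzA)
  set φ : ℝ → (Fin m → ℝ) × (Fin q → ℝ) :=
    fun t => (z.1, Function.update z.2 j (z.2 j + t)) with hφ
  have hφc : Continuous φ := by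
    apply Continuous.prodMk continuous_const
    apply continuous_pi
    intro k
    simp only [Function.update_apply]
    by_cases hk : k = j <;> simp [hk] <;> fun_prop
  have hφ0 : φ 0 = z := by simp [hφ]
  have hmem : φ ⁻¹' (interior B) ∈ nhds (0:ℝ) :=
    hφc.continuousAt.preimage_mem_nhds (by rw [hφ0]; exact isOpen_interior.mem_nhds hzB)
  obtain ⟨ε, hε, hball⟩ := Metric.mem_nhds_iff.1 hmem
  set t : ℝ := if 0 < c then ε / 2 else -(ε / 2) with ht
  have htb : t ∈ Metric.ball (0:ℝ) ε := by
    have habs : |t| = ε / 2 := by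
      rw [ht]; split
      · rw [abs_of_pos (half_pos hε)]
      · rw [abs_of_neg (by linarith : -(ε/2) < 0)]; ring
    simp only [Metric.mem_ball, Real.dist_eq, sub_zero, habs]
    linarith
  have hct : 0 < c * t := by
    rcases hc.lt_or_gt with h | h
    · rw [ht, if_neg (not_lt.2 h.le)]
      have := mul_pos_of_neg_of_neg h (by linarith : -(ε/2) < 0)
      linarith [this]
    · rw [ht, if_pos h]
      exact mul_pos h (half_pos hε)
  have hBt : g (φ t) ≤ 0 := hB _ (interior_subset (hball htb))
  have h2 : g (φ t) = g z + c * t := hlin z t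
  linarith


lemma disj_none_some (p q : ℕ) (j : Fin q) (e : Bool) :
    Disjoint (interior (subtile p q none)) (interior (subtile p q (some (j, e)))) := by
  apply key_disj j (if e then (-2:ℝ) else 2) (by cases e <;> norm_num)
    (fun z => sFun p z.1 - (if e then 2 * z.2 j - 1 else 1 - 2 * z.2 j))
  · intro z t
    simp only [Function.update_self]
    cases e <;> simp <;> ring
  · intro z hz
    obtain ⟨hT, habs⟩ := hz
    have h1 := habs j
    cases e <;> simp only [Bool.false_eq_true, if_true, if_false]
    · have h2 : -(2 * z.2 j - 1) ≤ |2 * z.2 j - 1| := neg_le_abs _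
      linarith
    · have h2 : 2 * z.2 j - 1 ≤ |2 * z.2 j - 1| := le_abs_self _
      linarith
  · intro z hz
    obtain ⟨hT, hk, hs⟩ := hz
    simp only [sub_nonpos]
    exact hs

lemma disj_some_some (p q : ℕ) {j k : Fin q} (hjk : j ≠ k) (e e' : Bool) :
    Disjoint (interior (subtile p q (some (j, e)))) (interior (subtile p q (some (k, e')))) := by
  apply key_disj j (if e then (2:ℝ) else -2) (by cases e <;> norm_num)
    (fun z => (if e then 2 * z.2 j - 1 else 1 - 2 * z.2 j)
      - (if e' then 2 * z.2 k - 1 else 1 - 2 * z.2 k))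
  · intro z t
    simp only [Function.update_self, Function.update_of_ne (Ne.symm hjk)]
    cases e <;> cases e' <;> simp <;> ring
  · intro z hz
    obtain ⟨hT, hall, hs⟩ := hz
    have h1 := hall k
    have h2 : (if e' then 2 * z.2 k - 1 else 1 - 2 * z.2 k) ≤ |2 * z.2 k - 1| := by
      cases e' <;> simp only [Bool.false_eq_true, if_true, if_false]
      · have := neg_le_abs (2 * z.2 k - 1); linarith
      · exact le_abs_self _
    linarith
  · intro z hz
    obtain ⟨hT, hall, hs⟩ := hz
    have h1 := hall j
    have h2 : (if e then 2 * z.2 j - 1 else 1 - 2 * z.2 j) ≤ |2 * z.2 j - 1| := by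
      cases e <;> simp only [Bool.false_eq_true, if_true, if_false]
      · have := neg_le_abs (2 * z.2 j - 1); linarith
      · exact le_abs_self _
    linarith

lemma disj_same_j (p q : ℕ) (j : Fin q) {e e' : Bool} (he : e ≠ e') :
    Disjoint (subtile p q (some (j, e))) (subtile p q (some (j, e'))) := by
  rw [Set.disjoint_left]
  intro z h1 h2
  obtain ⟨⟨⟨hx, -⟩, -⟩, -, hs1⟩ := h1
  obtain ⟨-, -, hs2⟩ := h2
  have hhalf := sFun_half hx
  cases e <;> cases e' <;> simp_all <;> linarith

/-- The `2q+1` sets `T₀` and `T_{j,ε}` cover `T`, and they have pairwise disjoint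
topological interiors. -/
theorem torus_subdivision_cover_and_disjoint_interiors (p q : ℕ) (hp : 1 ≤ p) (hq : 1 ≤ q) :
    (tileT p q = ⋃ i : Option (Fin q × Bool), subtile p q i) ∧
    Pairwise fun i i' : Option (Fin q × Bool) =>
      Disjoint (interior (subtile p q i)) (interior (subtile p q i')) := by
  constructor
  · ext z
    simp only [mem_iUnion]
    constructor
    · intro hz
      by_cases hall : ∀ k, |2 * z.2 k - 1| ≤ sFun p z.1
      · exact ⟨none, hz, hall⟩
      · push_neg at hall
        obtain ⟨k0, hk0⟩ := hall
        obtain ⟨j, -, hj⟩ := Finset.exists_max_image Finset.univ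
          (fun k => |2 * z.2 k - 1|) ⟨k0, Finset.mem_univ _⟩
        have hjs : sFun p z.1 ≤ |2 * z.2 j - 1| :=
          le_trans hk0.le (hj k0 (Finset.mem_univ _))
        by_cases hsign : 0 ≤ 2 * z.2 j - 1
        · refine ⟨some (j, true), hz, ?_, ?_⟩ <;>
            simp only [if_true] <;> rw [← abs_of_nonneg hsign]
          · exact fun k => hj k (Finset.mem_univ _)
          · exact hjs
        · have habs : (1 - 2 * z.2 j) = |2 * z.2 j - 1| := by
            rw [abs_of_neg (lt_of_not_ge hsign)]; ring
          refine ⟨some (j, false), hz, ?_, ?_⟩ <;>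
            simp only [Bool.false_eq_true, if_false] <;> rw [habs]
          · exact fun k => hj k (Finset.mem_univ _)
          · exact hjs
    · rintro ⟨i, hi⟩
      rcases i with - | ⟨j, e⟩ <;> exact hi.1
  · intro i i' h
    match i, i' with
    | none, none => exact absurd rfl h
    | none, some (j, e) => exact disj_none_some p q j e
    | some (j, e), none => exact (disj_none_some p q j e).symm
    | some (j, e), some (k, e') =>
      by_cases hjk : j = k
      · subst hjk
        have he : e ≠ e' := fun hee => h (by rw [hee])
        exact (disj_same_j p q j he).mono interior_subset interior_subset
      · exact disj_some_some p q hjk e e'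
end

section
/- Let p ≥ 1, q ≥ 1 be integers. The set T_0 is homeomorphic to T = Δ^{p−1} × [0,1]^q, and for each 1 ≤ j ≤ q and ε ∈ {0,1} the set T_{j,ε} is homeomorphic to Δ^p × [0,1]^{q−1}, where Δ^p = {u ∈ ℝ^p : u_i ≥ 0 for all i, u_1+⋯+u_p ≤ 1} is the standard p-simplex. (This identifies the homeomorphism types of the subtiles in the subdivision rule for the (p+q)-torus: one tile of type Δ^{p−1} × I^q and 2q tiles of type Δ^p × I^{q−1}.) -/
open Set

lemma sFun_half_le {p : ℕ} {x : Fin (p-1) → ℝ} (hx : x ∈ stdSimplexSet (p-1)) :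
    1/2 ≤ sFun p x := by
  have : 0 ≤ ∑ i, x i := Finset.sum_nonneg fun i _ => hx.1 i
  unfold sFun; linarith

lemma sFun_le_one {p : ℕ} {x : Fin (p-1) → ℝ} (hx : x ∈ stdSimplexSet (p-1)) :
    sFun p x ≤ 1 := by
  have := hx.2
  unfold sFun; linarith

lemma sFun_cont (p : ℕ) : Continuous (sFun p) := by
  unfold sFun
  exact (continuous_const.add (continuous_finset_sum _ fun i _ => continuous_apply i)).div_const 2

noncomputable def homeo0 (p q : ℕ) : ↥(subtile p q none) ≃ₜ ↥(tileT p q) where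
  toFun z := ⟨(z.1.1, fun k => ((2 * z.1.2 k - 1) / sFun p z.1.1 + 1) / 2), by
    obtain ⟨⟨hx, hw⟩, hs⟩ := z.2
    have hs0 : 0 < sFun p z.1.1 := lt_of_lt_of_le (by norm_num) (sFun_half_le hx)
    refine ⟨hx, fun k => ?_⟩
    obtain ⟨h1, h2⟩ := abs_le.1 (hs k)
    have e1 : (-1:ℝ) ≤ (2 * z.1.2 k - 1) / sFun p z.1.1 := by
      rw [le_div_iff₀ hs0]; linarith
    have e2 : (2 * z.1.2 k - 1) / sFun p z.1.1 ≤ 1 := (div_le_one hs0).2 h2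
    constructor <;> [linarith; linarith]⟩
  invFun z := ⟨(z.1.1, fun k => (sFun p z.1.1 * (2 * z.1.2 k - 1) + 1) / 2), by
    obtain ⟨hx, hw⟩ := z.2
    have hs0 : 0 < sFun p z.1.1 := lt_of_lt_of_le (by norm_num) (sFun_half_le hx)
    have hs1 : sFun p z.1.1 ≤ 1 := sFun_le_one hx
    refine ⟨⟨hx, fun k => ?_⟩, fun k => ?_⟩
    · obtain ⟨h1, h2⟩ := hw k
      constructor <;> nlinarith
    · obtain ⟨h1, h2⟩ := hw k
      have he : 2 * ((sFun p z.1.1 * (2 * z.1.2 k - 1) + 1) / 2) - 1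
          = sFun p z.1.1 * (2 * z.1.2 k - 1) := by ring
      rw [he, abs_mul, abs_of_pos hs0]
      have : |2 * z.1.2 k - 1| ≤ 1 := by rw [abs_le]; constructor <;> linarith
      nlinarith⟩
  left_inv z := by
    obtain ⟨⟨hx, hw⟩, hs⟩ := z.2
    have hs0 : 0 < sFun p z.1.1 := lt_of_lt_of_le (by norm_num) (sFun_half_le hx)
    apply Subtype.ext
    refine Prod.ext rfl ?_
    funext k
    show (sFun p z.1.1 * (2 * (((2 * z.1.2 k - 1) / sFun p z.1.1 + 1) / 2) - 1) + 1) / 2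
        = z.1.2 k
    field_simp
    ring
  right_inv z := by
    obtain ⟨hx, hw⟩ := z.2
    have hs0 : 0 < sFun p z.1.1 := lt_of_lt_of_le (by norm_num) (sFun_half_le hx)
    apply Subtype.ext
    refine Prod.ext rfl ?_
    funext k
    show ((2 * ((sFun p z.1.1 * (2 * z.1.2 k - 1) + 1) / 2) - 1) / sFun p z.1.1 + 1) / 2
        = z.1.2 k
    have he : 2 * ((sFun p z.1.1 * (2 * z.1.2 k - 1) + 1) / 2) - 1
        = sFun p z.1.1 * (2 * z.1.2 k - 1) := by ring
    rw [he, mul_div_cancel_left₀ _ (ne_of_gt hs0)]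
    ring
  continuous_toFun := by
    apply Continuous.subtype_mk
    refine Continuous.prodMk (continuous_fst.comp continuous_subtype_val) ?_
    refine continuous_pi fun k => ?_
    have hs : Continuous fun z : ↥(subtile p q none) => sFun p z.1.1 :=
      (sFun_cont p).comp (continuous_fst.comp continuous_subtype_val)
    have hne : ∀ z : ↥(subtile p q none), sFun p z.1.1 ≠ 0 := fun z =>
      ne_of_gt (lt_of_lt_of_le (by norm_num) (sFun_half_le z.2.1.1))
    have hw : Continuous fun z : ↥(subtile p q none) => 2 * z.1.2 k - 1 :=
      ((continuous_const.mul ((continuous_apply k).comp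
        (continuous_snd.comp continuous_subtype_val))).sub continuous_const)
    exact ((hw.div hs hne).add continuous_const).div_const 2
  continuous_invFun := by
    apply Continuous.subtype_mk
    refine Continuous.prodMk (continuous_fst.comp continuous_subtype_val) ?_
    refine continuous_pi fun k => ?_
    have hs : Continuous fun z : ↥(tileT p q) => sFun p z.1.1 :=
      (sFun_cont p).comp (continuous_fst.comp continuous_subtype_val)
    have hw : Continuous fun z : ↥(tileT p q) => 2 * z.1.2 k - 1 :=
      ((continuous_const.mul ((continuous_apply k).comp
        (continuous_snd.comp continuous_subtype_val))).sub continuous_const)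
    exact ((hs.mul hw).add continuous_const).div_const 2

def subtileJE (p q : ℕ) (j : Fin q) (σ : ℝ) : Set ((Fin (p - 1) → ℝ) × (Fin q → ℝ)) :=
  {z ∈ tileT p q |
    (∀ k, |2 * z.2 k - 1| ≤ σ * (2 * z.2 j - 1)) ∧ sFun p z.1 ≤ σ * (2 * z.2 j - 1)}

lemma subtile_some_eq (p q : ℕ) (j : Fin q) (e : Bool) :
    subtile p q (some (j, e)) = subtileJE p q j (if e then 1 else -1) := by
  cases e
  · ext z
    simp only [subtile, subtileJE, mem_setOf_eq, Set.sep_setOf, reduceIte]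
    constructor <;>
      · rintro ⟨h0, h1, h2⟩
        norm_num at h1 h2 ⊢
        exact ⟨h0, fun k => by linarith [h1 k], by linarith⟩
  · ext z
    simp only [subtile, subtileJE, mem_setOf_eq, Set.sep_setOf, reduceIte]
    constructor <;>
      · rintro ⟨h0, h1, h2⟩
        norm_num at h1 h2 ⊢
        exact ⟨h0, fun k => by linarith [h1 k], by linarith⟩


section JE
variable {p' q' : ℕ} {j : Fin (q'+1)} {σ : ℝ}

lemma mem_JE_facts (hσ : σ = 1 ∨ σ = -1)
    {z : (Fin ((p'+1) - 1) → ℝ) × (Fin (q'+1) → ℝ)}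
    (hz : z ∈ subtileJE (p'+1) (q'+1) j σ) :
    (1:ℝ)/2 ≤ σ * (2 * z.2 j - 1) ∧ σ * (2 * z.2 j - 1) ≤ 1 ∧
    sFun (p'+1) z.1 ≤ σ * (2 * z.2 j - 1) := by
  obtain ⟨⟨hx, hw⟩, habs, hst⟩ := hz
  have h0 : 0 ≤ ∑ i, z.1 i := Finset.sum_nonneg fun i _ => hx.1 i
  have hs : (1:ℝ)/2 ≤ sFun (p'+1) z.1 := by unfold sFun; linarith
  have hwj := hw j
  simp only [Icc, mem_setOf_eq] at hwj
  have habsj : σ * (2 * z.2 j - 1) ≤ 1 := by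
    rcases hσ with rfl | rfl <;> nlinarith [hwj.1, hwj.2]
  exact ⟨le_trans hs hst, habsj, hst⟩

set_option maxHeartbeats 1000000 in
noncomputable def homeoJE (p' q' : ℕ) (j : Fin (q'+1)) (σ : ℝ) (hσ : σ = 1 ∨ σ = -1) :
    ↥(subtileJE (p'+1) (q'+1) j σ) ≃ₜ ↥(tileT (p'+2) q') where
  toFun z := ⟨(Fin.snoc z.1.1 (2 * (σ * (2 * z.1.2 j - 1)) - 1 - ∑ i, z.1.1 i),
      fun k => ((2 * z.1.2 (j.succAbove k) - 1) / (σ * (2 * z.1.2 j - 1)) + 1) / 2), by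
    obtain ⟨⟨hx, hw⟩, habs, hst⟩ := z.2
    obtain ⟨ht1, ht2, ht3⟩ := mem_JE_facts hσ z.2
    set t := σ * (2 * z.1.2 j - 1) with htdef
    have ht0 : 0 < t := by linarith
    have hsEq : sFun (p'+1) z.1.1 = (1 + ∑ i, z.1.1 i) / 2 := rfl
    rw [hsEq] at ht3
    refine ⟨⟨?_, ?_⟩, ?_⟩
    · intro i
      dsimp only
      induction i using Fin.lastCases with
      | last => rw [Fin.snoc_last]; linarith
      | cast i => rw [Fin.snoc_castSucc]; exact hx.1 i
    · dsimp only
      have hb : (∑ i : Fin (p'+2-1), (Fin.snoc z.1.1 (2 * t - 1 - ∑ i, z.1.1 i) :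
            Fin (p'+1) → ℝ) i)
          = ∑ i : Fin (p'+1), (Fin.snoc z.1.1 (2 * t - 1 - ∑ i, z.1.1 i) :
            Fin (p'+1) → ℝ) i := rfl
      rw [hb, Fin.sum_univ_castSucc]
      simp only [Fin.snoc_castSucc, Fin.snoc_last]
      have hb1 : (∑ i : Fin p', z.1.1 i) = ∑ i : Fin (p'+1-1), z.1.1 i := rfl
      linarith [hb1]
    · intro k
      dsimp only
      obtain ⟨h1, h2⟩ := abs_le.1 (habs (j.succAbove k))
      have e1 : (-1:ℝ) ≤ (2 * z.1.2 (j.succAbove k) - 1) / t := by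
        rw [le_div_iff₀ ht0]; linarith
      have e2 : (2 * z.1.2 (j.succAbove k) - 1) / t ≤ 1 := (div_le_one ht0).2 h2
      exact ⟨by linarith, by linarith⟩⟩
  invFun z := ⟨(fun i => z.1.1 i.castSucc,
      j.insertNth ((σ * sFun (p'+2) z.1.1 + 1) / 2)
        (fun m => (sFun (p'+2) z.1.1 * (2 * z.1.2 m - 1) + 1) / 2)), by
    obtain ⟨hu, hv⟩ := z.2
    set s := sFun (p'+2) z.1.1 with hs
    have hsEq : s = (1 + ∑ i : Fin (p'+1), z.1.1 i) / 2 := by rw [hs]; rfl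
    have h0 : 0 ≤ ∑ i : Fin (p'+1), z.1.1 i := Finset.sum_nonneg fun i _ => hu.1 i
    have hu2 : ∑ i : Fin (p'+1), z.1.1 i ≤ 1 := hu.2
    have ht1 : (1:ℝ)/2 ≤ s := by rw [hsEq]; linarith
    have ht2 : s ≤ 1 := by rw [hsEq]; linarith
    have hsum : ∑ i : Fin (p'+1), z.1.1 i
        = (∑ i : Fin p', z.1.1 i.castSucc) + z.1.1 (Fin.last p') :=
      Fin.sum_univ_castSucc z.1.1
    have hlast : 0 ≤ z.1.1 (Fin.last p') := hu.1 (Fin.last p')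
    have hwj : (j.insertNth ((σ * s + 1) / 2)
        (fun m => (s * (2 * z.1.2 m - 1) + 1) / 2) : Fin (q'+1) → ℝ) j
        = (σ * s + 1) / 2 := by rw [Fin.insertNth_apply_same]
    have htt : σ * (2 * ((σ * s + 1) / 2) - 1) = s := by
      rcases hσ with rfl | rfl <;> ring
    refine ⟨⟨⟨fun i => hu.1 i.castSucc, ?_⟩, ?_⟩, ?_, ?_⟩
    · dsimp only
      have hb1 : (∑ i : Fin (p'+1-1), z.1.1 i.castSucc)
          = ∑ i : Fin p', z.1.1 i.castSucc := rfl
      rw [hb1]; linarith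
    · intro k
      dsimp only
      rcases eq_or_ne k j with rfl | hk
      · rw [hwj]
        rcases hσ with rfl | rfl <;> constructor <;>
          [linarith; linarith; linarith; linarith]
      · obtain ⟨m, rfl⟩ := Fin.exists_succAbove_eq hk
        rw [Fin.insertNth_apply_succAbove]
        obtain ⟨g1, g2⟩ := hv m
        constructor <;> nlinarith
    · intro k
      dsimp only
      rw [hwj, htt]
      rcases eq_or_ne k j with rfl | hk
      · rw [hwj]
        rcases hσ with rfl | rfl
        · rw [show 2 * ((1 * s + 1) / 2) - 1 = s by ring,
            abs_of_nonneg (by linarith : (0:ℝ) ≤ s)]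
        · rw [show 2 * ((-1 * s + 1) / 2) - 1 = -s by ring, abs_neg,
            abs_of_nonneg (by linarith : (0:ℝ) ≤ s)]
      · obtain ⟨m, rfl⟩ := Fin.exists_succAbove_eq hk
        rw [Fin.insertNth_apply_succAbove]
        obtain ⟨g1, g2⟩ := hv m
        rw [show 2 * ((s * (2 * z.1.2 m - 1) + 1) / 2) - 1 = s * (2 * z.1.2 m - 1) by ring,
          abs_mul, abs_of_nonneg (by linarith : (0:ℝ) ≤ s)]
        have : |2 * z.1.2 m - 1| ≤ 1 := by rw [abs_le]; constructor <;> linarith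
        nlinarith
    · dsimp only
      rw [hwj, htt]
      have hsx : sFun (p'+1) (fun i : Fin (p'+1-1) => z.1.1 i.castSucc)
          = (1 + ∑ i : Fin p', z.1.1 i.castSucc) / 2 := rfl
      rw [hsx]
      linarith⟩
  left_inv z := by
    obtain ⟨⟨hx, hw⟩, habs, hst⟩ := z.2
    obtain ⟨ht1, ht2, ht3⟩ := mem_JE_facts hσ z.2
    apply Subtype.ext
    dsimp only
    set t := σ * (2 * z.1.2 j - 1) with htdef
    have ht0 : t ≠ 0 := by intro h; rw [h] at ht1; norm_num at ht1
    have hsum : (∑ i : Fin (p'+1),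
        (Fin.snoc z.1.1 (2 * t - 1 - ∑ i, z.1.1 i) : Fin (p'+1) → ℝ) i) = 2 * t - 1 := by
      rw [Fin.sum_univ_castSucc]
      simp only [Fin.snoc_castSucc, Fin.snoc_last]
      have hb1 : (∑ i : Fin p', z.1.1 i) = ∑ i : Fin (p'+1-1), z.1.1 i := rfl
      linarith [hb1]
    have ht' : sFun (p'+2) (Fin.snoc z.1.1 (2 * t - 1 - ∑ i, z.1.1 i)) = t := by
      have hb : sFun (p'+2) (Fin.snoc z.1.1 (2 * t - 1 - ∑ i, z.1.1 i))
          = (1 + ∑ i : Fin (p'+1),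
            (Fin.snoc z.1.1 (2 * t - 1 - ∑ i, z.1.1 i) : Fin (p'+1) → ℝ) i) / 2 := rfl
      rw [hb, hsum]; ring
    refine Prod.ext ?_ ?_
    · funext i
      dsimp only
      rw [Fin.snoc_castSucc]
    · funext k
      dsimp only
      rcases eq_or_ne k j with rfl | hk
      · rw [Fin.insertNth_apply_same, ht', htdef]
        rcases hσ with rfl | rfl <;> ring
      · obtain ⟨m, rfl⟩ := Fin.exists_succAbove_eq hk
        rw [Fin.insertNth_apply_succAbove, ht']
        field_simp
        all_goals ring
  right_inv z := by
    obtain ⟨hu, hv⟩ := z.2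
    apply Subtype.ext
    dsimp only
    set s := sFun (p'+2) z.1.1 with hs
    have hsEq : s = (1 + ∑ i : Fin (p'+1), z.1.1 i) / 2 := by rw [hs]; rfl
    have h0 : 0 ≤ ∑ i : Fin (p'+1), z.1.1 i := Finset.sum_nonneg fun i _ => hu.1 i
    have ht1 : (1:ℝ)/2 ≤ s := by rw [hsEq]; linarith
    have ht0 : s ≠ 0 := by intro h; rw [h] at ht1; norm_num at ht1
    have hsum : ∑ i : Fin (p'+1), z.1.1 i
        = (∑ i : Fin p', z.1.1 i.castSucc) + z.1.1 (Fin.last p') :=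
      Fin.sum_univ_castSucc z.1.1
    have hwj : (j.insertNth ((σ * s + 1) / 2)
        (fun m => (s * (2 * z.1.2 m - 1) + 1) / 2) : Fin (q'+1) → ℝ) j
        = (σ * s + 1) / 2 := by rw [Fin.insertNth_apply_same]
    refine Prod.ext ?_ ?_
    · funext i
      dsimp only
      rw [hwj]
      induction i using Fin.lastCases with
      | last =>
        rw [Fin.snoc_last]
        have htt : σ * (2 * ((σ * s + 1) / 2) - 1) = s := by
          rcases hσ with rfl | rfl <;> ring
        rw [htt]
        have hb1 : (∑ i : Fin (p'+1-1), z.1.1 i.castSucc)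
            = ∑ i : Fin p', z.1.1 i.castSucc := rfl
        rw [hb1, hsEq]
        linarith
      | cast i => rw [Fin.snoc_castSucc]
    · funext k
      dsimp only
      rw [hwj]
      have htt : σ * (2 * ((σ * s + 1) / 2) - 1) = s := by
        rcases hσ with rfl | rfl <;> ring
      rw [htt, Fin.insertNth_apply_succAbove]
      field_simp
      all_goals ring
  continuous_toFun := by
    have hct : Continuous fun z : ↥(subtileJE (p'+1) (q'+1) j σ) =>
        σ * (2 * z.1.2 j - 1) :=
      continuous_const.mul ((continuous_const.mul ((continuous_apply j).comp
        (continuous_snd.comp continuous_subtype_val))).sub continuous_const)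
    have hne : ∀ z : ↥(subtileJE (p'+1) (q'+1) j σ), σ * (2 * z.1.2 j - 1) ≠ 0 := fun z => by
      have := (mem_JE_facts hσ z.2).1; intro h; rw [h] at this; norm_num at this
    apply Continuous.subtype_mk
    refine Continuous.prodMk ?_ ?_
    · refine continuous_pi fun i => ?_
      induction i using Fin.lastCases with
      | last =>
        simp only [Fin.snoc_last]
        exact ((continuous_const.mul hct).sub continuous_const).sub
          (continuous_finset_sum _ fun i _ => (continuous_apply i).comp
            (continuous_fst.comp continuous_subtype_val))
      | cast i =>
        simp only [Fin.snoc_castSucc]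
        exact (continuous_apply i).comp (continuous_fst.comp continuous_subtype_val)
    · refine continuous_pi fun k => ?_
      have hw : Continuous fun z : ↥(subtileJE (p'+1) (q'+1) j σ) =>
          2 * z.1.2 (j.succAbove k) - 1 :=
        (continuous_const.mul ((continuous_apply (j.succAbove k)).comp
          (continuous_snd.comp continuous_subtype_val))).sub continuous_const
      exact ((hw.div hct hne).add continuous_const).div_const 2
  continuous_invFun := by
    have hs : Continuous fun z : ↥(tileT (p'+2) q') => sFun (p'+2) z.1.1 :=
      (sFun_cont (p'+2)).comp (continuous_fst.comp continuous_subtype_val)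
    apply Continuous.subtype_mk
    refine Continuous.prodMk ?_ ?_
    · exact continuous_pi fun i =>
        (continuous_apply i.castSucc).comp (continuous_fst.comp continuous_subtype_val)
    · refine continuous_pi fun k => ?_
      rcases eq_or_ne k j with rfl | hk
      · simp only [Fin.insertNth_apply_same]
        exact ((continuous_const.mul hs).add continuous_const).div_const 2
      · obtain ⟨m, rfl⟩ := Fin.exists_succAbove_eq hk
        simp only [Fin.insertNth_apply_succAbove]
        have hv : Continuous fun z : ↥(tileT (p'+2) q') => 2 * z.1.2 m - 1 :=
          (continuous_const.mul ((continuous_apply m).comp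
            (continuous_snd.comp continuous_subtype_val))).sub continuous_const
        exact ((hs.mul hv).add continuous_const).div_const 2

end JE

/-- `T₀` is homeomorphic to `T = Δ^{p-1} × [0,1]^q`, and each `T_{j,ε}` is homeomorphic to
`Δ^p × [0,1]^{q-1}` (note `tileT (p+1) (q-1) = Δ^p × [0,1]^{q-1}`). -/
theorem torus_subdivision_subtile_homeomorphism_types (p q : ℕ) (hp : 1 ≤ p) (hq : 1 ≤ q) :
    Nonempty (↥(subtile p q none) ≃ₜ ↥(tileT p q)) ∧
    ∀ (j : Fin q) (e : Bool),
      Nonempty (↥(subtile p q (some (j, e))) ≃ₜ ↥(tileT (p + 1) (q - 1))) := by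
  obtain ⟨p', rfl⟩ : ∃ p', p = p' + 1 := ⟨p - 1, (Nat.succ_pred_eq_of_pos hp).symm⟩
  obtain ⟨q', rfl⟩ : ∃ q', q = q' + 1 := ⟨q - 1, (Nat.succ_pred_eq_of_pos hq).symm⟩
  refine ⟨⟨homeo0 _ _⟩, fun j e => ?_⟩
  exact ⟨(Homeomorph.setCongr (subtile_some_eq (p'+1) (q'+1) j e)).trans
    (homeoJE p' q' j (if e then 1 else -1) (by cases e <;> simp))⟩
end

section
/- The unit cube [0,1]^p is the union over all permutations σ of {1,…,p} of the p! simplices K_σ, i.e. [0,1]^p = ⋃_{σ ∈ S_p} K_σ. -/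
open Set

/-- The vertex `v_k^σ = e_{σ(1)} + ⋯ + e_{σ(k)}` of the simplex `K_σ`
(0-indexed: the sum of `e_{σ(i)}` over the first `k` indices `i`). -/
def cubeVtx (p : ℕ) (σ : Equiv.Perm (Fin p)) (k : ℕ) : Fin p → ℝ :=
  ∑ i ∈ Finset.univ.filter fun i : Fin p => (i : ℕ) < k, Pi.single (σ i) 1

/-- The simplex `K_σ`, the convex hull of the `p+1` points `v_0^σ, …, v_p^σ`. -/
def Ksimp (p : ℕ) (σ : Equiv.Perm (Fin p)) : Set (Fin p → ℝ) :=
  convexHull ℝ {x | ∃ k ≤ p, x = cubeVtx p σ k}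

/-- The unit cube `[0,1]^p`. -/
def unitCube (p : ℕ) : Set (Fin p → ℝ) :=
  {x | ∀ i, x i ∈ Icc (0 : ℝ) 1}

lemma cubeVtx_apply (p : ℕ) (σ : Equiv.Perm (Fin p)) (k : ℕ) (j : Fin p) :
    cubeVtx p σ k j = if ((σ.symm j : Fin p) : ℕ) < k then (1 : ℝ) else (0 : ℝ) := by
  classical
  unfold cubeVtx
  rw [Finset.sum_apply]
  have h1 : ∀ i : Fin p, (Pi.single (σ i) (1 : ℝ) : Fin p → ℝ) j = if i = σ.symm j then (1 : ℝ) else 0 := by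
    intro i
    rw [Pi.single_apply]
    congr 1
    simp [eq_comm, Equiv.eq_symm_apply]
  simp_rw [h1]
  rw [Finset.sum_ite_eq']
  simp

/-- The unit cube `[0,1]^p` is the union of the `p!` simplices `K_σ`. -/
theorem unitCube_eq_iUnion_Ksimp (p : ℕ) (hp : 1 ≤ p) :
    unitCube p = ⋃ σ : Equiv.Perm (Fin p), Ksimp p σ := by
  classical
  ext x
  simp only [mem_iUnion]
  constructor
  · intro hx
    set τ := Tuple.sort x with hτ
    set σ : Equiv.Perm (Fin p) := Fin.revPerm.trans τ with hσ
    refine ⟨σ, ?_⟩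
    -- x ∘ σ is antitone
    have hanti : ∀ i j : Fin p, i ≤ j → x (σ j) ≤ x (σ i) := by
      intro i j hij
      have := Tuple.monotone_sort x (Fin.rev_le_rev.mpr hij)
      simpa [hσ, Function.comp] using this
    -- the "heights" sequence
    set a : ℕ → ℝ := fun k =>
      if k = 0 then 1 else if h : k - 1 < p then x (σ ⟨k - 1, h⟩) else 0 with ha
    have ha0 : a 0 = 1 := by simp [ha]
    have hap : a (p + 1) = 0 := by simp [ha]
    have hamono : ∀ k, k ≤ p → a (k + 1) ≤ a k := by
      intro k hk
      rcases Nat.eq_zero_or_pos k with rfl | hk0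
      · have : a 1 = x (σ ⟨0, hp⟩) := by
          simp only [ha]
          rw [if_neg (by omega), dif_pos (by omega)]
        rw [this, ha0]
        exact (hx _).2
      · rcases eq_or_lt_of_le hk with rfl | hkp
        · have : a (k + 1) = 0 := by simp [ha]
          rw [this]
          have : a k = x (σ ⟨k - 1, by omega⟩) := by
            simp only [ha]
            rw [if_neg (by omega), dif_pos (by omega)]
          rw [this]
          exact (hx _).1
        · have h1 : a (k + 1) = x (σ ⟨k, hkp⟩) := by
            simp only [ha]
            rw [if_neg (by omega), dif_pos (by omega)]
            all_goals exact congrArg (fun t => x (σ t)) (Fin.ext (by simp))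
          have h2 : a k = x (σ ⟨k - 1, by omega⟩) := by
            simp only [ha]
            rw [if_neg (by omega), dif_pos (by omega)]
          rw [h1, h2]
          exact hanti _ _ (by rw [Fin.mk_le_mk]; omega)
    set w : ℕ → ℝ := fun k => a k - a (k + 1) with hw
    have hw0 : ∀ k ∈ Finset.range (p + 1), 0 ≤ w k := by
      intro k hk
      rw [Finset.mem_range] at hk
      exact sub_nonneg.mpr (hamono k (by omega))
    have hwsum : ∑ k ∈ Finset.range (p + 1), w k = 1 := by
      rw [hw]
      rw [Finset.sum_range_sub' a (p + 1), ha0, hap, sub_zero]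
    have hxx : x = ∑ k ∈ Finset.range (p + 1), w k • cubeVtx p σ k := by
      funext j
      rw [Finset.sum_apply]
      simp_rw [Pi.smul_apply, cubeVtx_apply, smul_eq_mul, mul_ite, mul_one, mul_zero]
      set m : ℕ := ((σ.symm j : Fin p) : ℕ) with hm
      have hmp : m < p := (σ.symm j).2
      rw [Finset.sum_ite, Finset.sum_const_zero, add_zero]
      have hfil : (Finset.range (p + 1)).filter (fun k => m < k) = Finset.Ico (m + 1) (p + 1) := by
        ext k
        simp only [Finset.mem_filter, Finset.mem_range, Finset.mem_Ico]
        omega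
      rw [hfil, Finset.sum_Ico_eq_sub _ (by omega), hw,
        Finset.sum_range_sub' a (p + 1), Finset.sum_range_sub' a (m + 1), ha0, hap]
      have hA : a (m + 1) = x (σ ⟨m, hmp⟩) := by
        simp only [ha]
        rw [if_neg (by omega), dif_pos (by omega)]
        all_goals exact congrArg (fun t => x (σ t)) (Fin.ext (by simp))
      have hj : σ ⟨m, hmp⟩ = j := by
        have h2 : (⟨m, hmp⟩ : Fin p) = σ.symm j := by
          ext; simp [hm]
        rw [h2, Equiv.apply_symm_apply]
      rw [sub_zero, sub_sub_cancel, hA, hj]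
    have hz : ∀ k ∈ Finset.range (p + 1),
        cubeVtx p σ k ∈ {y | ∃ k ≤ p, y = cubeVtx p σ k} := by
      intro k hk
      rw [Finset.mem_range] at hk
      exact ⟨k, by omega, rfl⟩
    have hz' : ∀ k ∈ Finset.range (p + 1),
        cubeVtx p σ k ∈ {y | ∃ k ≤ p, y = cubeVtx p σ k} := hz
    have := Finset.centerMass_mem_convexHull (Finset.range (p + 1)) hw0
      (by rw [hwsum]; norm_num) hz
    rwa [Finset.centerMass_eq_of_sum_1 _ _ hwsum, ← hxx] at this
  · rintro ⟨σ, hx⟩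
    have hconv : Convex ℝ (unitCube p) := by
      have : unitCube p = Set.pi Set.univ (fun _ : Fin p => Icc (0 : ℝ) 1) := by
        ext y; simp [unitCube, Set.mem_pi, Pi.le_def, forall_and]
      rw [this]
      exact convex_pi fun i _ => convex_Icc 0 1
    have hS : {y | ∃ k ≤ p, y = cubeVtx p σ k} ⊆ unitCube p := by
      rintro y ⟨k, hk, rfl⟩ i
      rw [cubeVtx_apply]
      split <;> norm_num
    exact convexHull_min hS hconv hx
end

section
/- Let n ≥ 1 and k ≥ 0 be integers, and let B(k) = ⋃ { v + [0,1]^n : v ∈ ℤ^n, ∑_{i=1}^n |v_i| ≤ k } ⊆ ℝ^n, the union of the unit lattice cubes whose base vertices lie in the ℓ¹ ball of radius k (the union of fundamental domains of the n-torus at word-distance at most k from the identity). Then B(k) is homeomorphic to the closed unit ball of ℝ^n, and its topological frontier S(k) = ∂B(k) is homeomorphic to the sphere S^{n−1}. -/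
open Set Metric

def Bset (n k : ℕ) : Set (Fin n → ℝ) :=
  {x | ∃ v : Fin n → ℤ, (∑ i, (v i).natAbs) ≤ k ∧ ∀ i, x i ∈ Icc ((v i : ℝ)) (v i + 1)}

lemma pi_subset_Bset {n k : ℕ} (M : Fin n → ℕ) (hM : (∑ i, M i) ≤ k) :
    (univ.pi fun i => Ioo (-(M i : ℝ)) ((M i : ℝ) + 1)) ⊆ Bset n k := by
  intro x hx
  refine ⟨fun i => ⌊x i⌋, ?_, fun i => ⟨Int.floor_le _, (Int.lt_floor_add_one _).le⟩⟩
  refine le_trans (Finset.sum_le_sum fun i _ => ?_) hM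
  show (⌊x i⌋).natAbs ≤ M i
  have h := hx i (mem_univ i)
  have hfl : -(M i : ℤ) ≤ ⌊x i⌋ := Int.le_floor.2 (by push_cast; linarith [h.1])
  have hfu : ⌊x i⌋ ≤ (M i : ℤ) :=
    Int.lt_add_one_iff.1 (Int.floor_lt.2 (by push_cast; linarith [h.2]))
  omega

lemma isCompact_Bset (n k : ℕ) : IsCompact (Bset n k) := by
  have hrw : Bset n k = ⋃ v ∈ {v : Fin n → ℤ | (∑ i, (v i).natAbs) ≤ k},
      univ.pi fun i => Icc ((v i : ℝ)) ((v i : ℝ) + 1) := by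
    ext x
    simp only [Bset, mem_setOf_eq, mem_iUnion, exists_prop, mem_pi, mem_univ, true_imp_iff]
  rw [hrw]
  refine Set.Finite.isCompact_biUnion ?_ fun v _ => isCompact_univ_pi fun i => isCompact_Icc
  refine Set.Finite.subset (Set.Finite.pi fun i : Fin n => Set.finite_Icc (-(k : ℤ)) k) ?_
  intro v hv
  simp only [mem_pi, mem_univ, true_imp_iff, mem_Icc]
  intro i
  have h1 : (v i).natAbs ≤ k := le_trans (Finset.single_le_sum (f := fun i => (v i).natAbs)
    (fun i _ => Nat.zero_le _) (Finset.mem_univ i)) hv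
  omega

lemma star_mem_interior {n k : ℕ} {x : Fin n → ℝ} (hx : x ∈ Bset n k)
    {t : ℝ} (ht0 : 0 ≤ t) (ht1 : t < 1) :
    (fun _ => (1:ℝ)/2) + t • (x - fun _ => (1:ℝ)/2) ∈ interior (Bset n k) := by
  obtain ⟨v, hv, hxv⟩ := hx
  have hopen : IsOpen (univ.pi fun i =>
      Ioo (-(((v i).natAbs : ℕ) : ℝ)) ((((v i).natAbs : ℕ) : ℝ) + 1)) :=
    isOpen_set_pi finite_univ fun i _ => isOpen_Ioo
  refine interior_maximal (pi_subset_Bset _ hv) hopen ?_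
  intro i _
  have h := hxv i
  set m : ℝ := (((v i).natAbs : ℕ) : ℝ) with hm
  have habs : |(v i : ℝ)| = m := by
    rw [hm, Nat.cast_natAbs]; push_cast; ring
  have hv1 : -m ≤ (v i : ℝ) := by rw [← habs]; exact neg_abs_le _
  have hv2 : (v i : ℝ) ≤ m := by rw [← habs]; exact le_abs_self _
  have hb : |x i - 1/2| ≤ m + 1/2 := by
    rw [abs_le]; constructor <;> [linarith [h.1]; linarith [h.2]]
  have hm0 : 0 ≤ m := by rw [hm]; positivity
  have key : |t * (x i - 1/2)| < m + 1/2 := by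
    rw [abs_mul, abs_of_nonneg ht0]
    nlinarith [abs_nonneg (x i - 1/2)]
  rw [abs_lt] at key
  have hval : (((fun _ => (1:ℝ)/2) + t • (x - fun _ => (1:ℝ)/2) : Fin n → ℝ)) i
      = 1/2 + t * (x i - 1/2) := rfl
  rw [mem_Ioo, hval]
  exact ⟨by linarith [key.1], by linarith [key.2]⟩

section StarShaped

variable {E : Type*} [NormedAddCommGroup E] [NormedSpace ℝ E] [ProperSpace E]

set_option maxHeartbeats 1000000 in
theorem starShaped_homeo (K : Set E) (c : E) (hK : IsCompact K)
    (hc : c ∈ interior K)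
    (hstar : ∀ x ∈ K, ∀ t : ℝ, 0 ≤ t → t < 1 → c + t • (x - c) ∈ interior K) :
    Nonempty (↥K ≃ₜ ↥(closedBall (0 : E) 1)) ∧
      Nonempty (↥(frontier K) ≃ₜ ↥(sphere (0 : E) 1)) := by
  classical
  have hcK : c ∈ K := interior_subset hc
  obtain ⟨R, hR0, hRK⟩ : ∃ R : ℝ, 0 < R ∧ ∀ x ∈ K, ‖x - c‖ ≤ R := by
    obtain ⟨r, hr⟩ := hK.isBounded.subset_closedBall c
    refine ⟨max r 1, lt_of_lt_of_le one_pos (le_max_right _ _), fun x hx => ?_⟩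
    have := hr hx
    rw [mem_closedBall, dist_eq_norm] at this
    exact this.trans (le_max_left _ _)
  set T : E → Set ℝ := fun u => {t : ℝ | 0 ≤ t ∧ c + t • u ∈ K} with hT
  set ρ : E → ℝ := fun u => sSup (T u) with hρdef
  have hT0 : ∀ u, (0:ℝ) ∈ T u := fun u => ⟨le_refl 0, by simpa using hcK⟩
  have hTbdd : ∀ u, ‖u‖ = 1 → BddAbove (T u) := by
    intro u hu
    refine ⟨R, fun t ht => ?_⟩
    have h := hRK _ ht.2
    rw [add_sub_cancel_left, norm_smul, hu, mul_one] at h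
    exact (le_abs_self t).trans h
  have hTclosed : ∀ u, IsClosed (T u) := by
    intro u
    have : T u = Ici (0:ℝ) ∩ (fun t : ℝ => c + t • u) ⁻¹' K := rfl
    rw [this]
    exact isClosed_Ici.inter (hK.isClosed.preimage
      (continuous_const.add (continuous_id.smul continuous_const)))
  have hρmem : ∀ u, ‖u‖ = 1 → ρ u ∈ T u := fun u hu =>
    (hTclosed u).csSup_mem ⟨0, hT0 u⟩ (hTbdd u hu)
  have hρ0 : ∀ u, ‖u‖ = 1 → 0 ≤ ρ u := fun u hu => (hρmem u hu).1
  have hρK : ∀ u, ‖u‖ = 1 → c + ρ u • u ∈ K := fun u hu => (hρmem u hu).2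
  have hρR : ∀ u, ‖u‖ = 1 → ρ u ≤ R := by
    intro u hu
    have h := hRK _ (hρK u hu)
    rw [add_sub_cancel_left, norm_smul, hu, mul_one] at h
    exact (le_abs_self _).trans h
  obtain ⟨ε, hε0, hεball⟩ : ∃ ε > (0:ℝ), ball c ε ⊆ K := by
    obtain ⟨ε, hε0, h⟩ := Metric.mem_nhds_iff.1 (mem_interior_iff_mem_nhds.1 hc)
    exact ⟨ε, hε0, h⟩
  have hρpos : ∀ u, ‖u‖ = 1 → 0 < ρ u := by
    intro u hu
    have hmem : (ε/2) ∈ T u := by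
      refine ⟨by linarith, hεball ?_⟩
      rw [mem_ball, dist_eq_norm, add_sub_cancel_left, norm_smul, hu, mul_one,
        Real.norm_eq_abs, abs_of_pos (by linarith)]
      linarith
    have := le_csSup (hTbdd u hu) hmem
    linarith
  have hle : ∀ u, ‖u‖ = 1 → ∀ t : ℝ, 0 ≤ t → c + t • u ∈ K → t ≤ ρ u :=
    fun u hu t ht htK => le_csSup (hTbdd u hu) ⟨ht, htK⟩
  have hint : ∀ u, ‖u‖ = 1 → ∀ t : ℝ, 0 ≤ t → t < ρ u → c + t • u ∈ interior K := by
    intro u hu t ht htρ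
    have hpos : 0 < ρ u := lt_of_le_of_lt ht htρ
    have h1 : c + (t / ρ u) • (c + ρ u • u - c) ∈ interior K :=
      hstar _ (hρK u hu) _ (div_nonneg ht hpos.le) ((div_lt_one hpos).2 htρ)
    rwa [add_sub_cancel_left, smul_smul, div_mul_cancel₀ _ hpos.ne'] at h1
  have hnotK : ∀ u, ‖u‖ = 1 → ∀ t : ℝ, ρ u < t → c + t • u ∉ K := by
    intro u hu t hρt hmem
    exact absurd (hle u hu t ((hρ0 u hu).trans hρt.le) hmem) (not_le.2 hρt)
  have hseg : ∀ u, ‖u‖ = 1 → ∀ t : ℝ, 0 ≤ t → t ≤ ρ u → c + t • u ∈ K := by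
    intro u hu t ht htle
    rcases htle.lt_or_eq with h | h
    · exact interior_subset (hint u hu t ht h)
    · rw [h]; exact hρK u hu
  -- continuity of ρ on the sphere
  have hρcont : ContinuousOn ρ (sphere (0:E) 1) := by
    intro u₀ hu₀
    have hu₀' : ‖u₀‖ = 1 := by simpa using hu₀
    rw [ContinuousWithinAt, Metric.tendsto_nhds]
    intro δ hδ
    have hupper : ∀ᶠ u in nhdsWithin u₀ (sphere (0:E) 1), ρ u < ρ u₀ + δ/2 := by
      have hU1open : IsOpen {u : E | c + (ρ u₀ + δ/2) • u ∉ K} := by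
        have h1 : IsClosed ((fun u : E => c + (ρ u₀ + δ/2) • u) ⁻¹' K) :=
          hK.isClosed.preimage (continuous_const.add (continuous_id.const_smul _))
        exact h1.isOpen_compl
      have hmemU1 : u₀ ∈ {u : E | c + (ρ u₀ + δ/2) • u ∉ K} :=
        hnotK u₀ hu₀' _ (by linarith)
      filter_upwards [mem_nhdsWithin_of_mem_nhds (hU1open.mem_nhds hmemU1),
        self_mem_nhdsWithin] with u hu husph
      have hu' : ‖u‖ = 1 := by simpa using husph
      by_contra hcon
      push_neg at hcon
      rcases lt_or_eq_of_le hcon with h | h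
      · exact hu (interior_subset (hint u hu' _ (by linarith [hρ0 u₀ hu₀']) h))
      · exact hu (h ▸ hρK u hu')
    have hlower : ∀ᶠ u in nhdsWithin u₀ (sphere (0:E) 1), ρ u₀ - δ < ρ u := by
      by_cases hsmall : ρ u₀ ≤ δ/2
      · filter_upwards [self_mem_nhdsWithin] with u husph
        have hu' : ‖u‖ = 1 := by simpa using husph
        have := hρpos u hu'
        linarith
      · push_neg at hsmall
        have ht₀ : (0:ℝ) ≤ ρ u₀ - δ/2 := by linarith
        have hV2 : u₀ ∈ {u : E | c + (ρ u₀ - δ/2) • u ∈ interior K} :=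
          hint u₀ hu₀' _ ht₀ (by linarith)
        have hV2open : IsOpen {u : E | c + (ρ u₀ - δ/2) • u ∈ interior K} :=
          isOpen_interior.preimage (continuous_const.add (continuous_id.const_smul _))
        filter_upwards [mem_nhdsWithin_of_mem_nhds (hV2open.mem_nhds hV2),
          self_mem_nhdsWithin] with u hu husph
        have hu' : ‖u‖ = 1 := by simpa using husph
        have := hle u hu' _ ht₀ (interior_subset hu)
        linarith
    filter_upwards [hupper, hlower] with u h1 h2
    rw [Real.dist_eq, abs_sub_lt_iff]
    exact ⟨by linarith, by linarith⟩
  -- the radial map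
  set f : E → E := fun y => c + ρ (‖y‖⁻¹ • y) • y with hf
  have hunit : ∀ y : E, y ≠ 0 → ‖‖y‖⁻¹ • y‖ = 1 := fun y hy => norm_smul_inv_norm hy
  have hf0 : f 0 = c := by simp [hf]
  have hfval : ∀ y : E, y ≠ 0 →
      f y = c + (ρ (‖y‖⁻¹ • y) * ‖y‖) • (‖y‖⁻¹ • y) := by
    intro y hy
    rw [hf]
    simp only []
    rw [smul_smul, mul_assoc, mul_inv_cancel₀ (norm_ne_zero_iff.2 hy), mul_one]
  have hfmapsK : ∀ y ∈ closedBall (0:E) 1, f y ∈ K := by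
    intro y hy
    by_cases h0 : y = 0
    · rw [h0, hf0]; exact hcK
    · have hu := hunit y h0
      have hyn : ‖y‖ ≤ 1 := by rwa [mem_closedBall, dist_zero_right] at hy
      rw [hfval y h0]
      refine hseg _ hu _ (mul_nonneg (hρ0 _ hu) (norm_nonneg y)) ?_
      calc ρ (‖y‖⁻¹ • y) * ‖y‖ ≤ ρ (‖y‖⁻¹ • y) * 1 :=
            mul_le_mul_of_nonneg_left hyn (hρ0 _ hu)
        _ = ρ (‖y‖⁻¹ • y) := mul_one _
  -- continuity of f
  have hfcont : ContinuousOn f (closedBall (0:E) 1) := by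
    intro y hy
    by_cases h0 : y = 0
    · subst h0
      rw [Metric.continuousWithinAt_iff]
      intro δ hδ
      refine ⟨δ / R, by positivity, fun z hz hdz => ?_⟩
      rw [hf0]
      by_cases hz0 : z = 0
      · rw [hz0, hf0]; simpa using hδ
      · have hu := hunit z hz0
        have hdd : dist (f z) c = ρ (‖z‖⁻¹ • z) * ‖z‖ := by
          rw [hf, dist_eq_norm]
          simp only [add_sub_cancel_left]
          rw [norm_smul, Real.norm_eq_abs, abs_of_nonneg (hρ0 _ hu)]
        rw [hdd]
        rw [dist_zero_right] at hdz
        have h1 : ρ (‖z‖⁻¹ • z) ≤ R := hρR _ hu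
        have h2 : ‖z‖ * R < δ := (lt_div_iff₀ hR0).1 hdz
        nlinarith [norm_nonneg z, hρ0 _ hu]
    · refine ContinuousAt.continuousWithinAt ?_
      have hcontu : ContinuousOn (fun y : E => ρ (‖y‖⁻¹ • y)) {y : E | y ≠ 0} := by
        refine hρcont.comp ?_ ?_
        · exact ContinuousOn.smul
            ((continuous_norm.continuousOn).inv₀ fun z hz => norm_ne_zero_iff.2 hz)
            continuous_id.continuousOn
        · intro z hz
          rw [mem_sphere_zero_iff_norm]
          exact hunit z hz
      have hopen : IsOpen {y : E | y ≠ 0} := isOpen_compl_singleton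
      have h1 : ContinuousAt (fun y : E => ρ (‖y‖⁻¹ • y)) y :=
        hcontu.continuousAt (hopen.mem_nhds h0)
      exact continuousAt_const.add (h1.smul continuousAt_id)
  -- injectivity
  have hinj : InjOn f (closedBall (0:E) 1) := by
    have hkey : ∀ y : E, y ≠ 0 → ρ (‖y‖⁻¹ • y) • y ≠ 0 := by
      intro y hy
      have := hρpos _ (hunit y hy)
      exact smul_ne_zero this.ne' hy
    intro y₁ h₁ y₂ h₂ heq
    have heq' : ρ (‖y₁‖⁻¹ • y₁) • y₁ = ρ (‖y₂‖⁻¹ • y₂) • y₂ := by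
      have h := heq
      rw [hf] at h
      exact add_left_cancel h
    by_cases h10 : y₁ = 0
    · by_cases h20 : y₂ = 0
      · rw [h10, h20]
      · exfalso
        apply hkey y₂ h20
        rw [← heq', h10, smul_zero]
    · by_cases h20 : y₂ = 0
      · exfalso
        apply hkey y₁ h10
        rw [heq', h20, smul_zero]
      · set ρ₁ := ρ (‖y₁‖⁻¹ • y₁) with hρ₁
        set ρ₂ := ρ (‖y₂‖⁻¹ • y₂) with hρ₂
        have hρ₁pos : 0 < ρ₁ := hρpos _ (hunit y₁ h10)
        have hρ₂pos : 0 < ρ₂ := hρpos _ (hunit y₂ h20)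
        have hy₂eq : y₂ = (ρ₁ / ρ₂) • y₁ := by
          rw [div_eq_mul_inv, mul_comm, ← smul_smul]
          rw [heq', smul_smul, inv_mul_cancel₀ hρ₂pos.ne', one_smul]
        have hspos : 0 < ρ₁ / ρ₂ := div_pos hρ₁pos hρ₂pos
        have huveq : ‖y₂‖⁻¹ • y₂ = ‖y₁‖⁻¹ • y₁ := by
          rw [hy₂eq, norm_smul, Real.norm_eq_abs, abs_of_pos hspos, smul_smul,
            mul_inv, mul_comm (ρ₁ / ρ₂)⁻¹ ‖y₁‖⁻¹, mul_assoc,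
            inv_mul_cancel₀ hspos.ne', mul_one]
        have hρeq : ρ₂ = ρ₁ := by rw [hρ₂, huveq, ← hρ₁]
        rw [hρeq] at heq'
        exact smul_right_injective E hρ₁pos.ne' heq'
  -- surjectivity
  have hsurj : SurjOn f (closedBall (0:E) 1) K := by
    intro x hx
    by_cases hxc : x = c
    · exact ⟨0, by simp, by rw [hf0, hxc]⟩
    · have hxc' : x - c ≠ 0 := sub_ne_zero.2 hxc
      set u := ‖x - c‖⁻¹ • (x - c) with hup
      have hu : ‖u‖ = 1 := norm_smul_inv_norm hxc'
      have hxeq : c + ‖x - c‖ • u = x := by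
        rw [hup, smul_smul, mul_inv_cancel₀ (norm_ne_zero_iff.2 hxc'), one_smul]
        abel
      have ht : ‖x - c‖ ≤ ρ u := hle u hu _ (norm_nonneg _) (by rw [hxeq]; exact hx)
      have hρu := hρpos u hu
      have hnx : 0 < ‖x - c‖ := norm_pos_iff.2 hxc'
      refine ⟨(‖x - c‖ / ρ u) • u, ?_, ?_⟩
      · rw [mem_closedBall, dist_zero_right, norm_smul, Real.norm_eq_abs,
          abs_of_pos (div_pos hnx hρu), hu, mul_one]
        exact div_le_one_of_le₀ ht hρu.le
      · have hy0 : (‖x - c‖ / ρ u) • u ≠ 0 :=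
          smul_ne_zero (div_pos hnx hρu).ne' (by rw [← norm_pos_iff, hu]; norm_num)
        have hnorm : ‖(‖x - c‖ / ρ u) • u‖ = ‖x - c‖ / ρ u := by
          rw [norm_smul, Real.norm_eq_abs, abs_of_pos (div_pos hnx hρu), hu, mul_one]
        have hunitdir : ‖(‖x - c‖ / ρ u) • u‖⁻¹ • ((‖x - c‖ / ρ u) • u) = u := by
          rw [hnorm, smul_smul, inv_mul_cancel₀ (div_pos hnx hρu).ne', one_smul]
        rw [hf]
        simp only []
        rw [hunitdir, smul_smul, mul_div_cancel₀ _ hρu.ne', hxeq]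
  -- frontier facts
  have hf_sphere_frontier : ∀ u : E, ‖u‖ = 1 → f u ∈ frontier K := by
    intro u hu
    have hfu : f u = c + ρ u • u := by
      rw [hf]
      simp only []
      rw [hu, inv_one, one_smul]
    rw [frontier, hK.isClosed.closure_eq]
    refine ⟨by rw [hfu]; exact hρK u hu, ?_⟩
    intro hintm
    obtain ⟨δ, hδ0, hδball⟩ := Metric.isOpen_iff.1 isOpen_interior _ hintm
    have : c + (ρ u + δ/2) • u ∈ K := by
      apply interior_subset
      apply hδball
      rw [mem_ball, hfu, dist_eq_norm]
      have : c + (ρ u + δ/2) • u - (c + ρ u • u) = (δ/2) • u := by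
        rw [add_smul]; abel
      rw [this, norm_smul, Real.norm_eq_abs, abs_of_pos (by linarith), hu, mul_one]
      linarith
    exact hnotK u hu _ (by linarith) this
  have hfrontier_sub : frontier K ⊆ f '' (sphere (0:E) 1) := by
    intro x hxf
    have hxK : x ∈ K := by
      have := hxf.1
      rwa [hK.isClosed.closure_eq] at this
    have hxint : x ∉ interior K := hxf.2
    have hxc : x ≠ c := fun h => hxint (h ▸ hc)
    have hxc' : x - c ≠ 0 := sub_ne_zero.2 hxc
    set u := ‖x - c‖⁻¹ • (x - c) with hup
    have hu : ‖u‖ = 1 := norm_smul_inv_norm hxc'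
    have hxeq : c + ‖x - c‖ • u = x := by
      rw [hup, smul_smul, mul_inv_cancel₀ (norm_ne_zero_iff.2 hxc'), one_smul]
      abel
    have ht : ‖x - c‖ ≤ ρ u := hle u hu _ (norm_nonneg _) (by rw [hxeq]; exact hxK)
    have hteq : ‖x - c‖ = ρ u := by
      rcases ht.lt_or_eq with h | h
      · exact absurd (by rw [← hxeq]; exact hint u hu _ (norm_nonneg _) h) hxint
      · exact h
    refine ⟨u, by rwa [mem_sphere_zero_iff_norm], ?_⟩
    have hfu : f u = c + ρ u • u := by
      rw [hf]
      simp only []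
      rw [hu, inv_one, one_smul]
    rw [hfu, ← hteq, hxeq]
  -- build the homeomorphisms
  have hbij1 : BijOn f (closedBall (0:E) 1) K := ⟨hfmapsK, hinj, hsurj⟩
  have hbij2 : BijOn f (sphere (0:E) 1) (frontier K) := by
    refine ⟨?_, hinj.mono sphere_subset_closedBall, ?_⟩
    · intro u hu
      exact hf_sphere_frontier u (by rwa [mem_sphere_zero_iff_norm] at hu)
    · intro x hx
      obtain ⟨u, hu, hux⟩ := hfrontier_sub hx
      exact ⟨u, hu, hux⟩
  constructor
  · have : CompactSpace (closedBall (0:E) 1) :=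
      isCompact_iff_compactSpace.1 (isCompact_closedBall 0 1)
    have hecont : Continuous (hbij1.equiv f) := by
      have hrestr : Continuous ((closedBall (0:E) 1).restrict f) := hfcont.restrict
      exact Continuous.subtype_mk hrestr _
    exact ⟨(hecont.homeoOfEquivCompactToT2).symm⟩
  · have : CompactSpace (sphere (0:E) 1) :=
      isCompact_iff_compactSpace.1 (isCompact_sphere 0 1)
    have hecont : Continuous (hbij2.equiv f) := by
      have hrestr : Continuous ((sphere (0:E) 1).restrict f) :=
        (hfcont.mono sphere_subset_closedBall).restrict
      exact Continuous.subtype_mk hrestr _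
    exact ⟨(hecont.homeoOfEquivCompactToT2).symm⟩

end StarShaped

/-- `B(k)` is homeomorphic to the closed unit ball of `ℝⁿ`, and its topological frontier
`S(k) = ∂B(k)` is homeomorphic to the sphere `S^{n-1}`. -/
theorem Bset_ball_and_frontier_sphere (n k : ℕ) (hn : 1 ≤ n) :
    Nonempty (↥(Bset n k) ≃ₜ ↥(Metric.closedBall (0 : EuclideanSpace ℝ (Fin n)) 1)) ∧
    Nonempty (↥(frontier (Bset n k)) ≃ₜ
      ↥(Metric.sphere (0 : EuclideanSpace ℝ (Fin n)) 1)) := by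
  set E := EuclideanSpace ℝ (Fin n) with hE
  let L : E ≃L[ℝ] (Fin n → ℝ) := EuclideanSpace.equiv (Fin n) ℝ
  let φ : E ≃ₜ (Fin n → ℝ) := L.toHomeomorph
  set K : Set E := φ ⁻¹' (Bset n k) with hKdef
  set c : E := L.symm (fun _ => (1:ℝ)/2) with hcdef
  have hφc : φ c = fun _ => (1:ℝ)/2 := by
    show L (L.symm _) = _
    simp
  have himg : φ.symm '' (Bset n k) = K := by
    rw [Homeomorph.image_symm]
  have hK : IsCompact K := by
    rw [← himg]
    exact (isCompact_Bset n k).image φ.symm.continuous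
  have hintK : interior K = φ ⁻¹' (interior (Bset n k)) :=
    (φ.preimage_interior _).symm
  have hc : c ∈ interior K := by
    rw [hintK]
    show φ c ∈ interior (Bset n k)
    rw [hφc]
    refine interior_maximal (pi_subset_Bset (n := n) (k := k) (fun _ => 0) (by simp))
      (isOpen_set_pi finite_univ fun i _ => isOpen_Ioo) ?_
    intro i _
    norm_num
  have hstar : ∀ x ∈ K, ∀ t : ℝ, 0 ≤ t → t < 1 → c + t • (x - c) ∈ interior K := by
    intro x hx t ht0 ht1
    rw [hintK]
    show φ (c + t • (x - c)) ∈ interior (Bset n k)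
    have hlin : φ (c + t • (x - c)) = φ c + t • (φ x - φ c) := by
      show L (c + t • (x - c)) = L c + t • (L x - L c)
      rw [map_add, map_smul, map_sub]
    rw [hlin, hφc]
    exact star_mem_interior hx ht0 ht1
  obtain ⟨⟨e1⟩, ⟨e2⟩⟩ := starShaped_homeo K c hK hc hstar
  have hfimg : φ.symm '' (frontier (Bset n k)) = frontier K := by
    rw [Homeomorph.image_symm]
    exact φ.preimage_frontier _
  exact ⟨⟨((φ.symm.image (Bset n k)).trans (Homeomorph.setCongr himg)).trans e1⟩,
    ⟨((φ.symm.image (frontier (Bset n k))).trans (Homeomorph.setCongr hfimg)).trans e2⟩⟩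
end
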